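/- Fix states c¹, c² ∈ Δ_M and positive constants A₁, B₂ with A₁·c¹(m) ≥ B₂·c²(m) for all types m. Then the greedy value iterates with zero initialization satisfy A₁·V^t_greedy(c¹) ≥ B₂·V^t_greedy(c²) for every t ≥ 0. -/

import Mathlib

open Finset

/-- Bayesian posterior belief after item `ℓ` is chosen from displayed set `w`. -/
noncomputable def post {M L : Type*} [Fintype M] (p : L → M → Finset L → ℝ)
    (c : M → ℝ) (ℓ : L) (w : Finset L) : M → ℝ :=
  fun m' => p ℓ m' w * c m' / (∑ m, p ℓ m w * c m)

/-- The Q-function associated to a value function `V`. -/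
noncomputable def Qfun {M L : Type*} [Fintype M] [Fintype L] (p : L → M → Finset L → ℝ)
    (γ : ℝ) (V : (M → ℝ) → ℝ) (w : Finset L) (c : M → ℝ) : ℝ :=
  ∑ m, ∑ ℓ, c m * p ℓ m w * (1 + γ * V (post p c ℓ w))

/-- Greedy value iteration: `V⁰ = 0` and `Vᵗ(c) = max_{w ∈ G} Q_{Vᵗ⁻¹}(w, c)`. -/
noncomputable def Vg {M L : Type*} [Fintype M] [Fintype L] (p : L → M → Finset L → ℝ)
    (γ : ℝ) (G : Finset (Finset L)) (hG : G.Nonempty) : ℕ → (M → ℝ) → ℝ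
  | 0 => fun _ => 0
  | t + 1 => fun c => G.sup' hG (fun w => Qfun p γ (Vg p γ G hG t) w c)

private lemma Qform {M L : Type*} [Fintype M] [Fintype L] (p : L → M → Finset L → ℝ)
    (γ : ℝ) (V : (M → ℝ) → ℝ) (w : Finset L) (c : M → ℝ) :
    Qfun p γ V w c = ∑ ℓ, (∑ m, p ℓ m w * c m) * (1 + γ * V (post p c ℓ w)) := by
  unfold Qfun
  rw [Finset.sum_comm]
  refine Finset.sum_congr rfl fun ℓ _ => ?_
  rw [Finset.sum_mul]
  exact Finset.sum_congr rfl fun m _ => by ring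

private lemma key {M L : Type*} [Fintype M] [Fintype L] (p : L → M → Finset L → ℝ)
    (γ : ℝ) (hγ : 0 ≤ γ) (G : Finset (Finset L)) (hG : G.Nonempty)
    (hp : ∀ (ℓ : L) (m : M) (w : Finset L), 0 ≤ p ℓ m w) (t : ℕ) :
    ∀ (c₁ c₂ : M → ℝ) (A B : ℝ), 0 ≤ A → 0 ≤ B →
      (∀ m, 0 ≤ c₁ m) → (∀ m, 0 ≤ c₂ m) → (∀ m, B * c₂ m ≤ A * c₁ m) →
      B * Vg p γ G hG t c₂ ≤ A * Vg p γ G hG t c₁ := by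
  induction t with
  | zero => intro _ _ _ _ _ _ _ _ _; simp [Vg]
  | succ t ih =>
    intro c₁ c₂ A B hA hB h1 h2 hAB
    have hQ : ∀ w, B * Qfun p γ (Vg p γ G hG t) w c₂ ≤
        A * Qfun p γ (Vg p γ G hG t) w c₁ := by
      intro w
      rw [Qform, Qform, Finset.mul_sum, Finset.mul_sum]
      refine Finset.sum_le_sum fun ℓ _ => ?_
      set D₁ := ∑ m, p ℓ m w * c₁ m with hD₁
      set D₂ := ∑ m, p ℓ m w * c₂ m with hD₂
      have hD₁0 : 0 ≤ D₁ := Finset.sum_nonneg fun m _ => mul_nonneg (hp _ _ _) (h1 m)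
      have hD₂0 : 0 ≤ D₂ := Finset.sum_nonneg fun m _ => mul_nonneg (hp _ _ _) (h2 m)
      have hDle : B * D₂ ≤ A * D₁ := by
        rw [hD₁, hD₂, Finset.mul_sum, Finset.mul_sum]
        refine Finset.sum_le_sum fun m _ => ?_
        calc B * (p ℓ m w * c₂ m) = p ℓ m w * (B * c₂ m) := by ring
          _ ≤ p ℓ m w * (A * c₁ m) := mul_le_mul_of_nonneg_left (hAB m) (hp ℓ m w)
          _ = A * (p ℓ m w * c₁ m) := by ring
      have hpost1 : ∀ m, 0 ≤ post p c₁ ℓ w m := fun m =>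
        div_nonneg (mul_nonneg (hp _ _ _) (h1 m)) hD₁0
      have hpost2 : ∀ m, 0 ≤ post p c₂ ℓ w m := fun m =>
        div_nonneg (mul_nonneg (hp _ _ _) (h2 m)) hD₂0
      have hkeypost : ∀ m, (B * D₂) * post p c₂ ℓ w m ≤ (A * D₁) * post p c₁ ℓ w m := by
        intro m
        simp only [post]
        rw [← hD₁, ← hD₂]
        rcases eq_or_lt_of_le hD₂0 with h2z | h2pos
        · rw [← h2z]
          simp only [mul_zero, zero_mul]
          exact mul_nonneg (mul_nonneg hA hD₁0)
            (div_nonneg (mul_nonneg (hp _ _ _) (h1 m)) hD₁0)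
        · have e2 : B * D₂ * (p ℓ m w * c₂ m / D₂) = B * (p ℓ m w * c₂ m) := by
            field_simp
          rw [e2]
          rcases eq_or_lt_of_le hD₁0 with h1z | h1pos
          · have hz : p ℓ m w * c₁ m = 0 := by
              have := (Finset.sum_eq_zero_iff_of_nonneg
                (fun m _ => mul_nonneg (hp ℓ m w) (h1 m))).mp (hD₁ ▸ h1z.symm)
              exact this m (Finset.mem_univ m)
            have hle0 : B * (p ℓ m w * c₂ m) ≤ 0 := by
              calc B * (p ℓ m w * c₂ m) = p ℓ m w * (B * c₂ m) := by ring
                _ ≤ p ℓ m w * (A * c₁ m) := mul_le_mul_of_nonneg_left (hAB m) (hp ℓ m w)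
                _ = A * (p ℓ m w * c₁ m) := by ring
                _ = 0 := by rw [hz, mul_zero]
            calc B * (p ℓ m w * c₂ m) ≤ 0 := hle0
              _ = A * D₁ * (p ℓ m w * c₁ m / D₁) := by rw [← h1z]; ring
          · have e1 : A * D₁ * (p ℓ m w * c₁ m / D₁) = A * (p ℓ m w * c₁ m) := by
              field_simp
            rw [e1]
            calc B * (p ℓ m w * c₂ m) = p ℓ m w * (B * c₂ m) := by ring
              _ ≤ p ℓ m w * (A * c₁ m) := mul_le_mul_of_nonneg_left (hAB m) (hp ℓ m w)
              _ = A * (p ℓ m w * c₁ m) := by ring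
      have hIV := ih (post p c₁ ℓ w) (post p c₂ ℓ w) (A * D₁) (B * D₂)
        (mul_nonneg hA hD₁0) (mul_nonneg hB hD₂0) hpost1 hpost2 hkeypost
      nlinarith [hDle, mul_le_mul_of_nonneg_left hIV hγ]
    show B * Vg p γ G hG (t + 1) c₂ ≤ A * Vg p γ G hG (t + 1) c₁
    simp only [Vg]
    obtain ⟨w, hw, hweq⟩ := Finset.exists_mem_eq_sup' hG
      (fun w => Qfun p γ (Vg p γ G hG t) w c₂)
    rw [hweq]
    calc B * Qfun p γ (Vg p γ G hG t) w c₂ ≤ A * Qfun p γ (Vg p γ G hG t) w c₁ := hQ w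
      _ ≤ A * G.sup' hG (fun w => Qfun p γ (Vg p γ G hG t) w c₁) :=
        mul_le_mul_of_nonneg_left (Finset.le_sup' (fun w => Qfun p γ (Vg p γ G hG t) w c₁) hw) hA

/-- Scaled monotonicity of the greedy value iterates over the belief simplex:
if `A₁ c¹ ≥ B₂ c²` componentwise then `A₁ Vᵗ(c¹) ≥ B₂ Vᵗ(c²)`. -/
theorem greedy_value_scaled_monotone {M L : Type*} [Fintype M] [Fintype L]
    (p : L → M → Finset L → ℝ) (γ : ℝ) (hγ : 0 ≤ γ)
    (G : Finset (Finset L)) (hG : G.Nonempty)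
    (hp : ∀ (ℓ : L) (m : M) (w : Finset L), 0 ≤ p ℓ m w ∧ p ℓ m w ≤ 1)
    (c₁ c₂ : M → ℝ)
    (hc₁ : (∀ m, 0 ≤ c₁ m) ∧ ∑ m, c₁ m = 1)
    (hc₂ : (∀ m, 0 ≤ c₂ m) ∧ ∑ m, c₂ m = 1)
    (A₁ B₂ : ℝ) (hA₁ : 0 < A₁) (hB₂ : 0 < B₂)
    (hAB : ∀ m, B₂ * c₂ m ≤ A₁ * c₁ m) (t : ℕ) :
    B₂ * Vg p γ G hG t c₂ ≤ A₁ * Vg p γ G hG t c₁ :=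
  key p γ hγ G hG (fun ℓ m w => (hp ℓ m w).1) t c₁ c₂ A₁ B₂ hA₁.le hB₂.le hc₁.1 hc₂.1 hAB
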